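/- arXiv:2410.08027 — 2 statements merged into one kernel-verified Lean document; each statement's English description precedes it below -/
import Mathlib

section
/- With B = 2(1 − exp(−αA))/α, the second moment of the one-dimensional truncated Laplacian distribution satisfies ∫ x² f(x) dx = −(2/(αB))·A·exp(−αA)·(A + 2/α) + 2/α², and in particular is strictly less than 2/α². -/
open Real MeasureTheory

/-- Truncated Laplacian density on `[-A, A]`. -/
noncomputable def truncLapDensity (α A B x : ℝ) : ℝ :=
  if |x| ≤ A then (1 / B) * Real.exp (-α * |x|) else 0

theorem truncLap_second_moment (α A : ℝ) (hα : 0 < α) (hA : 0 < A)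
    (B : ℝ) (hB : B = 2 * (1 - Real.exp (-α * A)) / α) :
    (∫ x : ℝ, x ^ 2 * truncLapDensity α A B x)
      = -(2 / (α * B)) * A * Real.exp (-α * A) * (A + 2 / α) + 2 / α ^ 2 ∧
    (∫ x : ℝ, x ^ 2 * truncLapDensity α A B x) < 2 / α ^ 2 := by
  have hαA : -α * A < 0 := by nlinarith
  have hexp1 : Real.exp (-α * A) < 1 := Real.exp_lt_one_iff.mpr hαA
  have hexp0 : 0 < Real.exp (-α * A) := Real.exp_pos _
  have hα0 : (α : ℝ) ≠ 0 := ne_of_gt hα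
  have hB0 : 0 < B := by
    rw [hB]
    have : 0 < 1 - Real.exp (-α * A) := by linarith
    positivity
  have hB0' : B ≠ 0 := ne_of_gt hB0
  -- rewrite as interval integral
  have h1 : (fun x : ℝ => x ^ 2 * truncLapDensity α A B x)
      = Set.indicator (Set.Icc (-A) A)
          (fun x => x ^ 2 * ((1 / B) * Real.exp (-α * |x|))) := by
    funext x
    simp only [truncLapDensity]
    by_cases h : |x| ≤ A
    · rw [if_pos h, Set.indicator_of_mem]
      rwa [Set.mem_Icc, ← abs_le]
    · rw [if_neg h, mul_zero, Set.indicator_of_notMem]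
      rwa [Set.mem_Icc, ← abs_le]
  have cont : Continuous fun x : ℝ => x ^ 2 * ((1 / B) * Real.exp (-α * |x|)) := by
    fun_prop
  have hI : (∫ x : ℝ, x ^ 2 * truncLapDensity α A B x)
      = ∫ x in (-A)..A, x ^ 2 * ((1 / B) * Real.exp (-α * |x|)) := by
    rw [h1, MeasureTheory.integral_indicator measurableSet_Icc,
      MeasureTheory.integral_Icc_eq_integral_Ioc,
      ← intervalIntegral.integral_of_le (by linarith : -A ≤ A)]
  -- split at 0
  have hsplit : (∫ x in (-A)..(0:ℝ), x ^ 2 * ((1 / B) * Real.exp (-α * |x|)))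
      + (∫ x in (0:ℝ)..A, x ^ 2 * ((1 / B) * Real.exp (-α * |x|)))
      = ∫ x in (-A)..A, x ^ 2 * ((1 / B) * Real.exp (-α * |x|)) :=
    intervalIntegral.integral_add_adjacent_intervals
      (cont.intervalIntegrable _ _) (cont.intervalIntegrable _ _)
  -- left piece
  have hGd : ∀ x : ℝ, HasDerivAt
      (fun x => (1 / B) * (Real.exp (α * x) * (x ^ 2 / α - 2 * x / α ^ 2 + 2 / α ^ 3)))
      (x ^ 2 * ((1 / B) * Real.exp (α * x))) x := by
    intro x
    have h1 : HasDerivAt (fun x : ℝ => Real.exp (α * x)) (Real.exp (α * x) * α) x := by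
      simpa using ((hasDerivAt_id x).const_mul α).exp
    have h2 : HasDerivAt (fun x : ℝ => x ^ 2 / α - 2 * x / α ^ 2 + 2 / α ^ 3)
        (2 * x / α - 2 / α ^ 2) x := by
      have h3 := (((hasDerivAt_pow 2 x).div_const α).sub
        (((hasDerivAt_id x).const_mul 2).div_const (α ^ 2))).add_const (2 / α ^ 3)
      refine h3.congr_deriv ?_
      norm_num
    have h4 := (h1.mul h2).const_mul (1 / B)
    refine h4.congr_deriv ?_
    field_simp
    ring
  have hFd : ∀ x : ℝ, HasDerivAt
      (fun x => -(1 / B) * (Real.exp (-α * x) * (x ^ 2 / α + 2 * x / α ^ 2 + 2 / α ^ 3)))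
      (x ^ 2 * ((1 / B) * Real.exp (-α * x))) x := by
    intro x
    have h1 : HasDerivAt (fun x : ℝ => Real.exp (-α * x)) (Real.exp (-α * x) * (-α)) x := by
      simpa using ((hasDerivAt_id x).const_mul (-α)).exp
    have h2 : HasDerivAt (fun x : ℝ => x ^ 2 / α + 2 * x / α ^ 2 + 2 / α ^ 3)
        (2 * x / α + 2 / α ^ 2) x := by
      have h3 := (((hasDerivAt_pow 2 x).div_const α).add
        (((hasDerivAt_id x).const_mul 2).div_const (α ^ 2))).add_const (2 / α ^ 3)
      refine h3.congr_deriv ?_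
      norm_num
    have h4 := (h1.mul h2).const_mul (-(1 / B))
    refine h4.congr_deriv ?_
    field_simp
    ring
  have contL : Continuous fun x : ℝ => x ^ 2 * ((1 / B) * Real.exp (α * x)) := by fun_prop
  have contR : Continuous fun x : ℝ => x ^ 2 * ((1 / B) * Real.exp (-α * x)) := by fun_prop
  have hL : (∫ x in (-A)..(0:ℝ), x ^ 2 * ((1 / B) * Real.exp (-α * |x|)))
      = (1 / B) * (Real.exp (α * 0) * (0 ^ 2 / α - 2 * 0 / α ^ 2 + 2 / α ^ 3))
        - (1 / B) * (Real.exp (α * (-A)) * ((-A) ^ 2 / α - 2 * (-A) / α ^ 2 + 2 / α ^ 3)) := by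
    rw [intervalIntegral.integral_congr (g := fun x => x ^ 2 * ((1 / B) * Real.exp (α * x)))]
    · exact intervalIntegral.integral_eq_sub_of_hasDerivAt (fun x _ => hGd x)
        (contL.intervalIntegrable _ _)
    · intro x hx
      rw [Set.uIcc_of_le (by linarith : -A ≤ (0:ℝ))] at hx
      simp only [abs_of_nonpos hx.2]
      ring_nf
  have hR : (∫ x in (0:ℝ)..A, x ^ 2 * ((1 / B) * Real.exp (-α * |x|)))
      = -(1 / B) * (Real.exp (-α * A) * (A ^ 2 / α + 2 * A / α ^ 2 + 2 / α ^ 3))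
        - -(1 / B) * (Real.exp (-α * 0) * (0 ^ 2 / α + 2 * 0 / α ^ 2 + 2 / α ^ 3)) := by
    rw [intervalIntegral.integral_congr (g := fun x => x ^ 2 * ((1 / B) * Real.exp (-α * x)))]
    · exact intervalIntegral.integral_eq_sub_of_hasDerivAt (fun x _ => hFd x)
        (contR.intervalIntegrable _ _)
    · intro x hx
      rw [Set.uIcc_of_le (by linarith : (0:ℝ) ≤ A)] at hx
      simp only [abs_of_nonneg hx.1]
  have hval : (∫ x : ℝ, x ^ 2 * truncLapDensity α A B x)
      = (2 / B) * (2 / α ^ 3 - Real.exp (-α * A) * (A ^ 2 / α + 2 * A / α ^ 2 + 2 / α ^ 3)) := by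
    rw [hI, ← hsplit, hL, hR]
    have hrw : Real.exp (α * (-A)) = Real.exp (-α * A) := by ring_nf
    rw [hrw]
    field_simp
    simp only [mul_zero, neg_zero, Real.exp_zero]
    ring
  have hE : Real.exp (-α * A) = 1 - α * B / 2 := by
    rw [hB]; field_simp
    ring
  have hkey : (∫ x : ℝ, x ^ 2 * truncLapDensity α A B x)
      = -(2 / (α * B)) * A * Real.exp (-α * A) * (A + 2 / α) + 2 / α ^ 2 := by
    rw [hval, hE]
    field_simp
    ring
  refine ⟨hkey, ?_⟩
  rw [hkey]
  have hpos : 0 < (2 / (α * B)) * A * Real.exp (-α * A) * (A + 2 / α) := by positivity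
  linarith
end

section
/- The variance (expected squared ℓ₂-norm of the noise) of the d-dimensional truncated Laplacian mechanism with per-coordinate parameters α = ε/Δ₁ is strictly less than 2d·Δ₁²/ε², which equals the expected squared ℓ₂-norm of the noise of the d-dimensional Laplacian mechanism with per-coordinate scale λ = Δ₁/ε. -/
open Real Set MeasureTheory

open intervalIntegral

section aux

variable {α A B : ℝ}

lemma exp_int (a A : ℝ) (ha : 0 < a) :
    ∫ x in (0:ℝ)..A, Real.exp (-a * x) = (1 - Real.exp (-a * A)) / a := by
  have key : ∀ x : ℝ, HasDerivAt (fun y => -(Real.exp (-a * y)) / a) (Real.exp (-a * x)) x := by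
    intro x
    have h : HasDerivAt (fun y : ℝ => -a * y) (-a) x := by
      simpa using (hasDerivAt_id x).const_mul (-a)
    have := ((h.exp).neg.div_const a)
    refine this.congr_deriv ?_
    field_simp
  rw [integral_eq_sub_of_hasDerivAt (fun x _ => key x)
    (by apply Continuous.intervalIntegrable; continuity)]
  field_simp
  simp only [mul_zero, neg_zero, Real.exp_zero]; ring

lemma sq_exp_int (a A : ℝ) (ha : 0 < a) :
    ∫ x in (0:ℝ)..A, x ^ 2 * Real.exp (-a * x)
      = (2 - Real.exp (-a * A) * (a ^ 2 * A ^ 2 + 2 * a * A + 2)) / a ^ 3 := by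
  have key : ∀ x : ℝ, HasDerivAt
      (fun y => -(Real.exp (-a * y)) * (y ^ 2 / a + 2 * y / a ^ 2 + 2 / a ^ 3))
      (x ^ 2 * Real.exp (-a * x)) x := by
    intro x
    have h : HasDerivAt (fun y : ℝ => -a * y) (-a) x := by
      simpa using (hasDerivAt_id x).const_mul (-a)
    have h1 : HasDerivAt (fun y : ℝ => -(Real.exp (-a * y))) (a * Real.exp (-a * x)) x := by
      refine h.exp.neg.congr_deriv ?_; ring
    have h2 : HasDerivAt (fun y : ℝ => y ^ 2 / a + 2 * y / a ^ 2 + 2 / a ^ 3)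
        (2 * x / a + 2 / a ^ 2) x := by
      have := (((hasDerivAt_pow 2 x).div_const a).add
        (((hasDerivAt_id x).const_mul 2).div_const (a ^ 2))).add_const (2 / a ^ 3)
      refine this.congr_deriv ?_; ring
    have := h1.mul h2
    refine this.congr_deriv ?_
    field_simp
    ring
  rw [integral_eq_sub_of_hasDerivAt (fun x _ => key x)
    (by apply Continuous.intervalIntegrable; continuity)]
  field_simp
  simp only [mul_zero, neg_zero, Real.exp_zero]; ring

lemma integral_abs_indicator (A : ℝ) (hA : 0 < A) (h : ℝ → ℝ) (hh : Continuous h) :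
    ∫ x : ℝ, (Icc (-A) A).indicator (fun x => h |x|) x = 2 * ∫ x in (0:ℝ)..A, h x := by
  have hc : Continuous fun x : ℝ => h |x| := hh.comp continuous_abs
  rw [MeasureTheory.integral_indicator measurableSet_Icc, integral_Icc_eq_integral_Ioc,
    ← intervalIntegral.integral_of_le (by linarith : -A ≤ A)]
  have hsplit : (∫ x in (-A)..(0:ℝ), h |x|) + ∫ x in (0:ℝ)..A, h |x|
      = ∫ x in (-A)..A, h |x| :=
    integral_add_adjacent_intervals (hc.intervalIntegrable _ _) (hc.intervalIntegrable _ _)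
  have hneg : (∫ x in (-A)..(0:ℝ), h |x|) = ∫ x in (0:ℝ)..A, h |x| := by
    have := intervalIntegral.integral_comp_neg (a := 0) (b := A) (fun x => h |x|)
    simp only [abs_neg, neg_zero] at this
    rw [← this]
  have hpos : (∫ x in (0:ℝ)..A, h |x|) = ∫ x in (0:ℝ)..A, h x := by
    apply intervalIntegral.integral_congr
    intro x hx
    rw [uIcc_of_le (le_of_lt hA)] at hx
    simp only []
    rw [abs_of_nonneg hx.1]
  rw [← hsplit, hneg, hpos]; ring

lemma truncLap_eq_indicator :
    truncLapDensity α A B = (Icc (-A) A).indicator (fun x => (1 / B) * Real.exp (-α * |x|)) := by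
  funext x
  simp only [truncLapDensity, indicator, mem_Icc, abs_le]

lemma truncLap_meas : Measurable (truncLapDensity α A B) := by
  rw [truncLap_eq_indicator]
  exact (Measurable.indicator (by fun_prop) measurableSet_Icc)

lemma truncLap_nonneg (hB : 0 < B) (x : ℝ) : 0 ≤ truncLapDensity α A B x := by
  unfold truncLapDensity
  split <;> positivity

lemma truncLap_integrable : Integrable (truncLapDensity α A B) := by
  rw [truncLap_eq_indicator]
  rw [integrable_indicator_iff measurableSet_Icc]
  exact (Continuous.integrableOn_Icc (by fun_prop))

lemma truncLap_sq_integrable : Integrable (fun x => truncLapDensity α A B x * x ^ 2) := by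
  rw [truncLap_eq_indicator]
  have : (fun x => (Icc (-A) A).indicator (fun x => (1 / B) * Real.exp (-α * |x|)) x * x ^ 2)
      = (Icc (-A) A).indicator (fun x => (1 / B) * Real.exp (-α * |x|) * x ^ 2) := by
    funext x
    by_cases h : x ∈ Icc (-A) A <;> simp [indicator, h]
  rw [this, integrable_indicator_iff measurableSet_Icc]
  exact (Continuous.integrableOn_Icc (by fun_prop))

lemma truncLap_integral_one (hα : 0 < α) (hA : 0 < A)
    (hB : B = 2 * (1 - Real.exp (-α * A)) / α) :
    ∫ x : ℝ, truncLapDensity α A B x = 1 := by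
  have hE : Real.exp (-α * A) < 1 := by
    rw [Real.exp_lt_one_iff]; nlinarith
  have h1 : 0 < 1 - Real.exp (-α * A) := by linarith
  have hBpos : 0 < B := by rw [hB]; exact div_pos (by nlinarith) hα
  rw [truncLap_eq_indicator]
  have := integral_abs_indicator A hA (fun y => (1 / B) * Real.exp (-α * y)) (by fun_prop)
  rw [this, intervalIntegral.integral_const_mul, exp_int α A hα]
  have h1' : (1 : ℝ) - Real.exp (-α * A) ≠ 0 := ne_of_gt h1
  have hα' : α ≠ 0 := ne_of_gt hα
  rw [hB]
  have : ∀ a b : ℝ, a ≠ 0 → b ≠ 0 → 2 * (1/(2*a/b) * (a/b)) = 1 := by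
    intro a b ha hb; field_simp
  exact this _ _ h1' hα'

lemma truncLap_integral_sq (hα : 0 < α) (hA : 0 < A)
    (hB : B = 2 * (1 - Real.exp (-α * A)) / α) :
    (∫ x : ℝ, truncLapDensity α A B x * x ^ 2) < 2 / α ^ 2 := by
  have hE : Real.exp (-α * A) < 1 := by
    rw [Real.exp_lt_one_iff]; nlinarith
  have hE0 : 0 < Real.exp (-α * A) := Real.exp_pos _
  have h1 : 0 < 1 - Real.exp (-α * A) := by linarith
  have hBpos : 0 < B := by rw [hB]; exact div_pos (by nlinarith) hα
  have heq : (fun x : ℝ => truncLapDensity α A B x * x ^ 2)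
      = (Icc (-A) A).indicator (fun x => (1 / B) * (|x| ^ 2 * Real.exp (-α * |x|))) := by
    rw [truncLap_eq_indicator]
    funext x
    by_cases h : x ∈ Icc (-A) A <;> simp [indicator, h, sq_abs] <;> ring
  rw [heq]
  have := integral_abs_indicator A hA (fun y => (1 / B) * (y ^ 2 * Real.exp (-α * y)))
    (by fun_prop)
  rw [this, intervalIntegral.integral_const_mul, sq_exp_int α A hα]
  rw [hB]
  set E := Real.exp (-α * A) with hEdef
  have hrw : 2 * (1 / (2 * (1 - E) / α) * ((2 - E * (α ^ 2 * A ^ 2 + 2 * α * A + 2)) / α ^ 3))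
      = (2 * α * (2 - E * (α ^ 2 * A ^ 2 + 2 * α * A + 2))) / (2 * (1 - E) * α ^ 3) := by
    have : ∀ a b c : ℝ, a ≠ 0 → b ≠ 0 →
        2 * (1 / (2 * a / b) * (c / b ^ 3)) = (2 * b * c) / (2 * a * b ^ 3) := by
      intro a b c ha hb; field_simp
    exact this _ _ _ (ne_of_gt h1) (ne_of_gt hα)
  rw [hrw, div_lt_div_iff₀ (by nlinarith [pow_pos hα 3]) (by positivity)]
  nlinarith [mul_pos (mul_pos (pow_pos hα 3) hE0)
    (by nlinarith : (0:ℝ) < α ^ 2 * A ^ 2 + 2 * α * A)]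

end aux

lemma map_eval_pi {d : ℕ} (μ : MeasureTheory.Measure ℝ) [IsProbabilityMeasure μ] (i : Fin d) :
    (Measure.pi fun _ : Fin d => μ).map (Function.eval i) = μ := by
  ext s hs
  rw [Measure.map_apply (measurable_pi_apply i) hs, Set.eval_preimage, Measure.pi_pi]
  classical
  rw [Finset.prod_eq_single i (fun j _ hj => by
    rw [Function.update_of_ne hj]; exact measure_univ) (by simp)]
  simp

theorem truncLap_variance_lt_Laplace (d : ℕ) (hd : 1 ≤ d) (Δ₁ ε α A B : ℝ)
    (hΔ₁ : 0 < Δ₁) (hε : 0 < ε) (hα : α = ε / Δ₁) (hA : 0 < A)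
    (hB : B = 2 * (1 - Real.exp (-α * A)) / α) :
    (∫ η : Fin d → ℝ, ∑ i, (η i) ^ 2
        ∂(Measure.pi fun _ : Fin d =>
          (volume : Measure ℝ).withDensity fun x => ENNReal.ofReal (truncLapDensity α A B x)))
      < 2 * d * Δ₁ ^ 2 / ε ^ 2 := by
  have hαpos : 0 < α := by rw [hα]; positivity
  have hE : Real.exp (-α * A) < 1 := by rw [Real.exp_lt_one_iff]; nlinarith
  have hBpos : 0 < B := by rw [hB]; exact div_pos (by nlinarith) hαpos
  set f : ℝ → NNReal := fun x => (truncLapDensity α A B x).toNNReal with hf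
  have hfm : Measurable f := truncLap_meas.real_toNNReal
  set μ : Measure ℝ :=
    (volume : Measure ℝ).withDensity (fun x => ENNReal.ofReal (truncLapDensity α A B x)) with hμ
  have nonneg := truncLap_nonneg (α := α) (A := A) (B := B) hBpos
  have hμf : μ = (volume : Measure ℝ).withDensity (fun x => (f x : ENNReal)) := rfl
  have hprob : IsProbabilityMeasure μ := by
    constructor
    rw [hμ, withDensity_apply _ MeasurableSet.univ, Measure.restrict_univ,
      ← ofReal_integral_eq_lintegral_ofReal truncLap_integrable
        (Filter.Eventually.of_forall nonneg),
      truncLap_integral_one hαpos hA hB]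
    simp
  have hV : ∫ x, x ^ 2 ∂μ = ∫ x, truncLapDensity α A B x * x ^ 2 := by
    rw [hμf, integral_withDensity_eq_integral_smul hfm]
    congr 1; funext x
    simp [hf, NNReal.smul_def, Real.coe_toNNReal _ (nonneg x)]
  have hVint : Integrable (fun x : ℝ => x ^ 2) μ := by
    rw [hμf, integrable_withDensity_iff_integrable_smul hfm]
    have : (fun x : ℝ => f x • x ^ 2) = fun x => truncLapDensity α A B x * x ^ 2 := by
      funext x
      simp [hf, NNReal.smul_def, Real.coe_toNNReal _ (nonneg x)]
    rw [this]
    exact truncLap_sq_integrable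
  set ν := Measure.pi fun _ : Fin d => μ with hν
  have hmap : ∀ i : Fin d, ν.map (Function.eval i) = μ := fun i => map_eval_pi μ i
  have hsm : ∀ i : Fin d, AEStronglyMeasurable (fun x : ℝ => x ^ 2) (ν.map (Function.eval i)) :=
    fun i => (continuous_pow 2).aestronglyMeasurable
  have hiInt : ∀ i : Fin d, Integrable (fun η : Fin d → ℝ => (η i) ^ 2) ν := by
    intro i
    have := (integrable_map_measure (hsm i) (measurable_pi_apply i).aemeasurable).mp
      (by rw [hmap i]; exact hVint)
    exact this
  have hsum : (∫ η : Fin d → ℝ, ∑ i, (η i) ^ 2 ∂ν)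
      = ∑ i : Fin d, ∫ η : Fin d → ℝ, (η i) ^ 2 ∂ν :=
    integral_finset_sum Finset.univ fun i _ => hiInt i
  have heach : ∀ i : Fin d, (∫ η : Fin d → ℝ, (η i) ^ 2 ∂ν) = ∫ x, x ^ 2 ∂μ := by
    intro i
    rw [← hmap i, integral_map (measurable_pi_apply i).aemeasurable (hsm i)]
  rw [hsum]
  simp only [heach]
  rw [Finset.sum_const, Finset.card_univ, Fintype.card_fin, nsmul_eq_mul]
  have hlt : ∫ x, x ^ 2 ∂μ < 2 / α ^ 2 := by
    rw [hV]; exact truncLap_integral_sq hαpos hA hB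
  have h2 : 2 / α ^ 2 = 2 * Δ₁ ^ 2 / ε ^ 2 := by
    rw [hα]; field_simp
  have hd' : (0 : ℝ) < d := by exact_mod_cast Nat.lt_of_lt_of_le Nat.zero_lt_one hd
  calc (d : ℝ) * ∫ x, x ^ 2 ∂μ < d * (2 / α ^ 2) := by
        exact (mul_lt_mul_iff_right₀ hd').mpr hlt
    _ = 2 * d * Δ₁ ^ 2 / ε ^ 2 := by rw [h2]; ring
end
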